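/- Let (A, A*) be a Leonard pair on a (d+1)-dimensional K-vector space with A-eigenvalues θ_0, ..., θ_d, A*-eigenvalues a*_i = tr(E_i A*), where E_i are the primitive idempotents of A, and define P(x,y) = x² − βxy + y² − γ(x+y) − ϱ. For scalars β, γ, ϱ, γ*, ω, η ∈ K, the equation A²A* − β·AA*A + A*A² − γ·(AA* + A*A) − ϱ·A* = γ*·A² + ω·A + η·I holds if and only if P(θ_{i−1}, θ_i) = 0 for 1 ≤ i ≤ d and a*_i · P(θ_i, θ_i) = γ*·θ_i² + ω·θ_i + η for 0 ≤ i ≤ d. -/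

import Mathlib

/-- A square matrix is irreducible tridiagonal: nonzero entries lie within
distance one of the diagonal, and all sub- and superdiagonal entries are nonzero. -/
def IsIrreducibleTridiagonal {K : Type*} [Field K] {n : ℕ}
    (M : Matrix (Fin n) (Fin n) K) : Prop :=
  (∀ i j : Fin n, ((i : ℕ) + 1 < j ∨ (j : ℕ) + 1 < i) → M i j = 0) ∧
  (∀ i j : Fin n, ((i : ℕ) + 1 = j ∨ (j : ℕ) + 1 = i) → M i j ≠ 0)

theorem stmt_13 {K V : Type*} [Field K] [AddCommGroup V] [Module K V]
    (d : ℕ) (A B : Module.End K V)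
    (c : Module.Basis (Fin (d + 1)) K V)
    (hAdiag : (LinearMap.toMatrix c c A).IsDiag)
    (hBtri : IsIrreducibleTridiagonal (LinearMap.toMatrix c c B))
    (hLP : ∃ b : Module.Basis (Fin (d + 1)) K V,
      IsIrreducibleTridiagonal (LinearMap.toMatrix b b A) ∧
      (LinearMap.toMatrix b b B).IsDiag)
    (θ : Fin (d + 1) → K) (hθ : ∀ i, θ i = LinearMap.toMatrix c c A i i)
    (E : Fin (d + 1) → Module.End K V)
    (hE : ∀ i, E i = Matrix.toLin c c (Matrix.single i i 1))
    (as : Fin (d + 1) → K)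
    (has : ∀ i, as i = LinearMap.trace K V (E i * B))
    (β γ ϱ γs ω η : K) (P : K → K → K)
    (hP : ∀ x y, P x y = x ^ 2 - β * x * y + y ^ 2 - γ * (x + y) - ϱ) :
    (A ^ 2 * B - β • (A * B * A) + B * A ^ 2 - γ • (A * B + B * A) - ϱ • B =
      γs • A ^ 2 + ω • A + η • 1) ↔
    ((∀ i : ℕ, (h : i < d) → P (θ ⟨i, by omega⟩) (θ ⟨i + 1, by omega⟩) = 0) ∧
     (∀ i : Fin (d + 1), as i * P (θ i) (θ i) = γs * θ i ^ 2 + ω * θ i + η)) := by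
  classical
  set Bm := LinearMap.toMatrix c c B with hBm
  have hAmd : LinearMap.toMatrix c c A = Matrix.diagonal θ := by
    ext i j
    by_cases h : i = j
    · subst h; simp [Matrix.diagonal, (hθ i).symm]
    · rw [hAdiag h, Matrix.diagonal_apply_ne _ h]
  -- trace computation
  have hBii : ∀ i, as i = Bm i i := by
    intro i
    rw [has i, LinearMap.trace_eq_matrix_trace K c, LinearMap.toMatrix_mul, hE,
      LinearMap.toMatrix_toLin, ← hBm]
    simp [Matrix.trace, Matrix.mul_apply, Matrix.single, Matrix.diag,
      Finset.sum_ite_eq, ite_and]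
  -- key entrywise reformulation
  have hkey : (A ^ 2 * B - β • (A * B * A) + B * A ^ 2 - γ • (A * B + B * A) - ϱ • B =
      γs • A ^ 2 + ω • A + η • 1) ↔
      ∀ i j, P (θ i) (θ j) * Bm i j =
        if i = j then γs * θ i ^ 2 + ω * θ i + η else 0 := by
    rw [← (LinearMap.toMatrix c c).injective.eq_iff]
    simp only [sq, map_sub, map_add, map_smul, LinearMap.toMatrix_mul,
      LinearMap.toMatrix_one, hAmd, ← hBm]
    rw [← Matrix.ext_iff]
    refine forall_congr' fun i => forall_congr' fun j => ?_
    simp only [Matrix.sub_apply, Matrix.add_apply, Matrix.smul_apply,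
      Matrix.diagonal_mul_diagonal, Matrix.diagonal_mul, Matrix.mul_diagonal,
      Matrix.one_apply, Matrix.diagonal_apply, smul_eq_mul]
    rw [hP]
    by_cases hij : i = j
    · subst hij
      simp only [eq_self_iff_true, if_true]
      constructor <;> intro h <;> linear_combination h
    · simp only [if_neg hij]
      constructor <;> intro h <;> linear_combination h
  rw [hkey]
  constructor
  · intro h
    constructor
    · intro i hi
      have h2 := h ⟨i, by omega⟩ ⟨i + 1, by omega⟩
      rw [if_neg (by simp [Fin.ext_iff])] at h2
      have hne : Bm ⟨i, by omega⟩ ⟨i + 1, by omega⟩ ≠ 0 :=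
        hBtri.2 _ _ (Or.inl rfl)
      rcases mul_eq_zero.mp h2 with h' | h'
      · exact h'
      · exact absurd h' hne
    · intro i
      have h2 := h i i
      rw [if_pos rfl] at h2
      rw [hBii, mul_comm, h2]
  · rintro ⟨h1, h2⟩ i j
    by_cases hij : i = j
    · subst hij
      rw [if_pos rfl, mul_comm, ← hBii, h2]
    · rw [if_neg hij]
      have hvij : (i : ℕ) ≠ (j : ℕ) := fun h => hij (Fin.ext h)
      rcases lt_trichotomy ((i : ℕ) + 1) (j : ℕ) with hlt | heq | hgt
      · rw [hBtri.1 i j (Or.inl hlt), mul_zero]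
      · have hi : (i : ℕ) < d := by have := j.isLt; omega
        have := h1 i hi
        have hji : j = ⟨(i : ℕ) + 1, by omega⟩ := Fin.ext heq.symm
        rw [hji]
        rw [show (⟨(i : ℕ), by omega⟩ : Fin (d + 1)) = i from Fin.ext rfl] at this
        rw [this, zero_mul]
      · rcases lt_trichotomy ((j : ℕ) + 1) (i : ℕ) with hlt' | heq' | hgt'
        · rw [hBtri.1 i j (Or.inr hlt'), mul_zero]
        · have hj : (j : ℕ) < d := by have := i.isLt; omega
          have := h1 j hj
          have hij' : i = ⟨(j : ℕ) + 1, by omega⟩ := Fin.ext heq'.symm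
          have hsym : P (θ i) (θ j) = P (θ j) (θ i) := by rw [hP, hP]; ring
          rw [hsym, hij']
          rw [show (⟨(j : ℕ), by omega⟩ : Fin (d + 1)) = j from Fin.ext rfl] at this
          rw [this, zero_mul]
        · omega
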